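/- There exist constants A, B (depending on d) such that the function f̂₀(r) = r − f₀(r) satisfies |f̂₀(r)| ≤ A + B log(1+r) for all r ≥ 0, where f₀(r) = 2γ_d ∫₀^r ((1+u²)/u²)^{(d−1)/2} ∫₀^u v^{d−1}/(1+v²)^{(d+1)/2} dv du. -/

import Mathlib

open MeasureTheory Real intervalIntegral

lemma aux_pow_le (n : ℕ) : ∀ x : ℝ, 0 ≤ x → x ≤ 1 → (1 + x) ^ n ≤ 1 + (2 ^ n - 1) * x := by
  induction n with
  | zero => intro x hx _; simp
  | succ n ih =>
    intro x hx hx1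
    have h := ih x hx hx1
    have h1 : (0:ℝ) ≤ 1 + x := by linarith
    calc (1 + x) ^ (n+1) = (1 + x) ^ n * (1 + x) := by ring
      _ ≤ (1 + (2 ^ n - 1) * x) * (1 + x) := by
          apply mul_le_mul_of_nonneg_right h h1
      _ = 1 + (2 ^ n) * x + (2 ^ n - 1) * x * x := by ring
      _ ≤ 1 + (2 ^ n) * x + (2 ^ n - 1) * x * 1 := by
          have : (0:ℝ) ≤ (2 ^ n - 1) * x := by
            apply mul_nonneg _ hx
            have : (1:ℝ) ≤ 2 ^ n := one_le_pow₀ (by norm_num)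
            linarith
          nlinarith
      _ = 1 + (2 ^ (n+1) - 1) * x := by ring

lemma sinW (n : ℕ) : ∫ x in (0:ℝ)..(π/2), Real.sin x ^ n
    = (Real.sqrt π / 2) * (Real.Gamma ((n + 1) / 2) / Real.Gamma ((n : ℝ) / 2 + 1)) := by
  induction n using Nat.twoStepInduction with
  | zero =>
    simp only [pow_zero, integral_one]
    rw [show (((0:ℕ):ℝ)+1)/2 = 1/2 by norm_num, show ((0:ℕ):ℝ)/2+1 = 1 by norm_num,
      Real.Gamma_one_half_eq, Real.Gamma_one]
    rw [div_one, div_mul_eq_mul_div, Real.mul_self_sqrt Real.pi_pos.le]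
    ring
  | one =>
    have h32 : Real.Gamma ((3:ℝ)/2) = Real.sqrt π / 2 := by
      have : ((3:ℝ)/2) = 1/2 + 1 := by norm_num
      rw [this, Real.Gamma_add_one (by norm_num), Real.Gamma_one_half_eq]; ring
    have hsp : Real.sqrt π > 0 := Real.sqrt_pos.2 Real.pi_pos
    rw [show (((1:ℕ):ℝ))/2 + 1 = (3:ℝ)/2 by norm_num, h32,
      show ((((1:ℕ):ℝ))+1)/2 = 1 by norm_num, Real.Gamma_one]
    simp only [pow_one, integral_sin, Real.cos_zero, Real.cos_pi_div_two]
    field_simp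
    norm_num
  | more n ih _ =>
    have hrec : ∫ x in (0:ℝ)..(π/2), Real.sin x ^ (n + 2)
        = ((n:ℝ) + 1) / ((n:ℝ) + 2) * ∫ x in (0:ℝ)..(π/2), Real.sin x ^ n := by
      rw [integral_sin_pow]
      simp [Real.cos_pi_div_two]
    have ha : (0:ℝ) < ((n:ℝ) + 1) / 2 := by positivity
    have hb : (0:ℝ) < (n:ℝ) / 2 + 1 := by positivity
    have hG1 : Real.Gamma (((n:ℝ) + 2 + 1) / 2) = (((n:ℝ)+1)/2) * Real.Gamma (((n:ℝ)+1)/2) := by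
      rw [show (((n:ℝ) + 2 + 1) / 2) = ((n:ℝ)+1)/2 + 1 by ring, Real.Gamma_add_one ha.ne']
    have hG2 : Real.Gamma (((n:ℝ) + 2) / 2 + 1) = ((n:ℝ)/2 + 1) * Real.Gamma ((n:ℝ)/2 + 1) := by
      rw [show (((n:ℝ) + 2) / 2 + 1) = ((n:ℝ)/2 + 1) + 1 by ring, Real.Gamma_add_one hb.ne']
    have hGb : Real.Gamma ((n:ℝ)/2 + 1) > 0 := Real.Gamma_pos_of_pos hb
    rw [hrec, ih]
    push_cast
    rw [hG1, hG2]
    field_simp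

lemma tan_image : Real.tan '' Set.Ioo 0 (π/2) = Set.Ioi 0 := by
  ext y
  constructor
  · rintro ⟨x, ⟨hx0, hx1⟩, rfl⟩
    exact Real.tan_pos_of_pos_of_lt_pi_div_two hx0 hx1
  · intro hy
    refine ⟨Real.arctan y, ⟨by simpa using Real.arctan_strictMono hy, Real.arctan_lt_pi_div_two y⟩, Real.tan_arctan y⟩

lemma key_identity (d : ℕ) (hd : 2 ≤ d) :
    (∫ v in Set.Ioi (0:ℝ), v ^ ((d:ℝ) - 1) / (1 + v ^ 2) ^ (((d:ℝ) + 1) / 2))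
      = (Real.sqrt π / 2) * (Real.Gamma ((d:ℝ) / 2) / Real.Gamma (((d:ℝ) + 1) / 2)) := by
  have hsub : Set.Ioo (0:ℝ) (π/2) ⊆ Set.Ioo (-(π/2)) (π/2) := by
    intro x hx; exact ⟨by linarith [hx.1, Real.pi_pos], hx.2⟩
  have hderiv : ∀ x ∈ Set.Ioo (0:ℝ) (π/2),
      HasDerivWithinAt Real.tan (1 / Real.cos x ^ 2) (Set.Ioo (0:ℝ) (π/2)) x := by
    intro x hx
    have hc : Real.cos x ≠ 0 := (Real.cos_pos_of_mem_Ioo (hsub hx)).ne'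
    exact (Real.hasDerivAt_tan hc).hasDerivWithinAt
  have hinj : Set.InjOn Real.tan (Set.Ioo (0:ℝ) (π/2)) := Real.injOn_tan.mono hsub
  have hcv := MeasureTheory.integral_image_eq_integral_abs_deriv_smul measurableSet_Ioo hderiv hinj
    (fun v => v ^ ((d:ℝ) - 1) / (1 + v ^ 2) ^ (((d:ℝ) + 1) / 2))
  rw [tan_image] at hcv
  rw [hcv]
  have hpt : ∀ x ∈ Set.Ioo (0:ℝ) (π/2),
      |1 / Real.cos x ^ 2| • (Real.tan x ^ ((d:ℝ) - 1) / (1 + Real.tan x ^ 2) ^ (((d:ℝ) + 1) / 2))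
        = Real.sin x ^ (d - 1 : ℕ) := by
    intro x hx
    have hc : 0 < Real.cos x := Real.cos_pos_of_mem_Ioo (hsub hx)
    have hs : 0 < Real.sin x := Real.sin_pos_of_pos_of_lt_pi hx.1 (by linarith [hx.2, Real.pi_pos])
    have ht : Real.tan x = Real.sin x / Real.cos x := Real.tan_eq_sin_div_cos x
    have h1 : 1 + Real.tan x ^ 2 = 1 / Real.cos x ^ 2 := by
      rw [ht]; field_simp
      linarith [Real.sin_sq_add_cos_sq x]
    have hc2 : (Real.cos x ^ 2 : ℝ) = Real.cos x ^ (2:ℝ) := by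
      rw [← Real.rpow_natCast (Real.cos x) 2]; norm_num
    have h2 : (1 / Real.cos x ^ 2) ^ (((d:ℝ) + 1) / 2) = 1 / Real.cos x ^ ((d:ℝ) + 1) := by
      rw [Real.div_rpow zero_le_one (by positivity), Real.one_rpow, hc2,
        ← Real.rpow_mul hc.le]
      congr 1
      ring
    have h3 : Real.tan x ^ ((d:ℝ) - 1)
        = Real.sin x ^ ((d:ℝ) - 1) / Real.cos x ^ ((d:ℝ) - 1) := by
      rw [ht, Real.div_rpow hs.le hc.le]
    have habs : |1 / Real.cos x ^ 2| = 1 / Real.cos x ^ 2 := abs_of_pos (by positivity)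
    rw [habs, smul_eq_mul, h1, h2, h3]
    have hcd1 : (0:ℝ) < Real.cos x ^ ((d:ℝ) - 1) := Real.rpow_pos_of_pos hc _
    have hcd2 : (0:ℝ) < Real.cos x ^ ((d:ℝ) + 1) := Real.rpow_pos_of_pos hc _
    have hkey : Real.cos x ^ ((d:ℝ) + 1) = Real.cos x ^ ((d:ℝ) - 1) * Real.cos x ^ 2 := by
      rw [hc2, ← Real.rpow_add hc]; congr 1; ring
    have hsd : Real.sin x ^ ((d:ℝ) - 1) = Real.sin x ^ (d - 1 : ℕ) := by
      rw [← Real.rpow_natCast (Real.sin x) (d-1)]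
      congr 1
      push_cast [Nat.cast_sub (by omega : 1 ≤ d)]
      ring
    rw [hkey, hsd]
    field_simp
  rw [MeasureTheory.setIntegral_congr_fun measurableSet_Ioo hpt]
  have : (∫ x in Set.Ioo (0:ℝ) (π/2), Real.sin x ^ (d - 1 : ℕ))
      = ∫ x in (0:ℝ)..(π/2), Real.sin x ^ (d - 1 : ℕ) := by
    rw [intervalIntegral.integral_of_le (by positivity), MeasureTheory.integral_Ioc_eq_integral_Ioo]
  rw [this, sinW]
  have h1 : (((d - 1 : ℕ):ℝ) + 1) / 2 = (d:ℝ)/2 := by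
    push_cast [Nat.cast_sub (by omega : 1 ≤ d)]; ring
  have h2 : ((d - 1 : ℕ):ℝ)/2 + 1 = ((d:ℝ)+1)/2 := by
    push_cast [Nat.cast_sub (by omega : 1 ≤ d)]; ring
  rw [h1, h2]

lemma phi_cont (d : ℕ) (hd : 2 ≤ d) :
    Continuous (fun v : ℝ => v ^ ((d:ℝ) - 1) / (1 + v ^ 2) ^ (((d:ℝ) + 1) / 2)) := by
  apply Continuous.div
  · refine continuous_iff_continuousAt.2 fun x => Real.continuousAt_rpow_const x _ ?_
    right
    have : (1:ℝ) ≤ (d:ℝ) := by exact_mod_cast Nat.one_le_of_lt hd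
    linarith
  · exact (continuous_const.add (continuous_pow 2)).rpow_const
      (fun x => Or.inr (by positivity))
  · intro x
    exact (Real.rpow_pos_of_pos (by positivity) _).ne'

lemma phi_nonneg (d : ℕ) (v : ℝ) (hv : 0 ≤ v) :
    0 ≤ v ^ ((d:ℝ) - 1) / (1 + v ^ 2) ^ (((d:ℝ) + 1) / 2) := by positivity

lemma one_le_denom (d : ℕ) (v : ℝ) : (1:ℝ) ≤ (1 + v ^ 2) ^ (((d:ℝ) + 1) / 2) := by
  calc (1:ℝ) = 1 ^ (((d:ℝ) + 1) / 2) := (Real.one_rpow _).symm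
    _ ≤ (1 + v ^ 2) ^ (((d:ℝ) + 1) / 2) :=
      Real.rpow_le_rpow zero_le_one (by nlinarith [sq_nonneg v]) (by positivity)

lemma phi_le_rpow (d : ℕ) (v : ℝ) (hv : 0 ≤ v) :
    v ^ ((d:ℝ) - 1) / (1 + v ^ 2) ^ (((d:ℝ) + 1) / 2) ≤ v ^ ((d:ℝ) - 1) :=
  div_le_self (Real.rpow_nonneg hv _) (one_le_denom d v)

lemma phi_le_inv_sq (d : ℕ) (hd : 2 ≤ d) (v : ℝ) (hv : 0 < v) :
    v ^ ((d:ℝ) - 1) / (1 + v ^ 2) ^ (((d:ℝ) + 1) / 2) ≤ v ^ (-2 : ℝ) := by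
  have hv2 : (v ^ 2 : ℝ) = v ^ (2:ℝ) := by
    rw [← Real.rpow_natCast v 2]; norm_num
  have hden : v ^ ((d:ℝ) + 1) ≤ (1 + v ^ 2) ^ (((d:ℝ) + 1) / 2) := by
    have : v ^ ((d:ℝ) + 1) = (v ^ 2) ^ (((d:ℝ) + 1) / 2) := by
      rw [hv2, ← Real.rpow_mul hv.le]; congr 1; ring
    rw [this]
    exact Real.rpow_le_rpow (by positivity) (by nlinarith [sq_nonneg v]) (by positivity)
  have hpos : (0:ℝ) < v ^ ((d:ℝ) + 1) := Real.rpow_pos_of_pos hv _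
  calc v ^ ((d:ℝ) - 1) / (1 + v ^ 2) ^ (((d:ℝ) + 1) / 2)
      ≤ v ^ ((d:ℝ) - 1) / v ^ ((d:ℝ) + 1) :=
        div_le_div_of_nonneg_left (Real.rpow_nonneg hv.le _) hpos hden
    _ = v ^ (-2 : ℝ) := by
        rw [← Real.rpow_sub hv]; congr 1; ring

lemma phi_integrableOn (d : ℕ) (hd : 2 ≤ d) :
    IntegrableOn (fun v : ℝ => v ^ ((d:ℝ) - 1) / (1 + v ^ 2) ^ (((d:ℝ) + 1) / 2))
      (Set.Ioi (0:ℝ)) := by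
  rw [show Set.Ioi (0:ℝ) = Set.Ioc 0 1 ∪ Set.Ioi 1 from (Set.Ioc_union_Ioi_eq_Ioi zero_le_one).symm]
  apply MeasureTheory.IntegrableOn.union
  · exact (phi_cont d hd).integrableOn_Ioc
  · apply MeasureTheory.Integrable.mono' (integrableOn_Ioi_rpow_of_lt (show (-2:ℝ) < -1 by norm_num) zero_lt_one)
    · exact (phi_cont d hd).aestronglyMeasurable.restrict
    · filter_upwards [MeasureTheory.ae_restrict_mem measurableSet_Ioi] with v hv
      have hv1 : (1:ℝ) < v := hv
      rw [Real.norm_eq_abs, abs_of_nonneg (phi_nonneg d v (by linarith))]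
      exact phi_le_inv_sq d hd v (by linarith)

lemma tail_nonneg (d : ℕ) (u : ℝ) (hu : 0 ≤ u) :
    0 ≤ ∫ v in Set.Ioi u, v ^ ((d:ℝ) - 1) / (1 + v ^ 2) ^ (((d:ℝ) + 1) / 2) :=
  MeasureTheory.setIntegral_nonneg measurableSet_Ioi fun v hv =>
    phi_nonneg d v (le_of_lt (lt_of_le_of_lt hu hv))

lemma tail_le (d : ℕ) (hd : 2 ≤ d) (u : ℝ) (hu : 1 ≤ u) :
    (∫ v in Set.Ioi u, v ^ ((d:ℝ) - 1) / (1 + v ^ 2) ^ (((d:ℝ) + 1) / 2)) ≤ 1 / u := by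
  have hu0 : (0:ℝ) < u := lt_of_lt_of_le one_pos hu
  have hint : IntegrableOn (fun v : ℝ => v ^ ((d:ℝ) - 1) / (1 + v ^ 2) ^ (((d:ℝ) + 1) / 2))
      (Set.Ioi u) := (phi_integrableOn d hd).mono_set (Set.Ioi_subset_Ioi hu0.le)
  have hint2 : IntegrableOn (fun v : ℝ => v ^ (-2:ℝ)) (Set.Ioi u) :=
    integrableOn_Ioi_rpow_of_lt (show (-2:ℝ) < -1 by norm_num) hu0
  calc (∫ v in Set.Ioi u, v ^ ((d:ℝ) - 1) / (1 + v ^ 2) ^ (((d:ℝ) + 1) / 2))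
      ≤ ∫ v in Set.Ioi u, v ^ (-2:ℝ) := by
        apply MeasureTheory.setIntegral_mono_on hint hint2 measurableSet_Ioi
        intro v hv
        exact phi_le_inv_sq d hd v (lt_trans hu0 hv)
    _ = 1 / u := by
        rw [integral_Ioi_rpow_of_lt (show (-2:ℝ) < -1 by norm_num) hu0]
        norm_num [Real.rpow_neg_one]

lemma I_split (d : ℕ) (hd : 2 ≤ d) (u : ℝ) (hu : 0 ≤ u) :
    (∫ v in (0:ℝ)..u, v ^ ((d:ℝ) - 1) / (1 + v ^ 2) ^ (((d:ℝ) + 1) / 2))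
      = (∫ v in Set.Ioi (0:ℝ), v ^ ((d:ℝ) - 1) / (1 + v ^ 2) ^ (((d:ℝ) + 1) / 2))
        - ∫ v in Set.Ioi u, v ^ ((d:ℝ) - 1) / (1 + v ^ 2) ^ (((d:ℝ) + 1) / 2) := by
  rw [intervalIntegral.integral_of_le hu, eq_sub_iff_add_eq,
    ← MeasureTheory.setIntegral_union (Set.Ioc_disjoint_Ioi le_rfl) measurableSet_Ioi
      ((phi_integrableOn d hd).mono_set Set.Ioc_subset_Ioi_self)
      ((phi_integrableOn d hd).mono_set (Set.Ioi_subset_Ioi hu)),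
    Set.Ioc_union_Ioi_eq_Ioi hu]

lemma cont_num (d : ℕ) (hd : 2 ≤ d) : Continuous (fun v : ℝ => v ^ ((d:ℝ) - 1)) := by
  refine continuous_iff_continuousAt.2 fun x => Real.continuousAt_rpow_const x _ ?_
  right
  have : (1:ℝ) ≤ (d:ℝ) := by exact_mod_cast Nat.one_le_of_lt hd
  linarith

lemma I_le (d : ℕ) (hd : 2 ≤ d) (u : ℝ) (hu : 0 ≤ u) :
    (∫ v in (0:ℝ)..u, v ^ ((d:ℝ) - 1) / (1 + v ^ 2) ^ (((d:ℝ) + 1) / 2))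
      ≤ u ^ (d:ℝ) / d := by
  have hd1 : (1:ℝ) ≤ (d:ℝ) := by exact_mod_cast Nat.one_le_of_lt hd
  calc (∫ v in (0:ℝ)..u, v ^ ((d:ℝ) - 1) / (1 + v ^ 2) ^ (((d:ℝ) + 1) / 2))
      ≤ ∫ v in (0:ℝ)..u, v ^ ((d:ℝ) - 1) := by
        apply intervalIntegral.integral_mono_on hu
          ((phi_cont d hd).intervalIntegrable 0 u) ((cont_num d hd).intervalIntegrable 0 u)
        intro v hv
        exact phi_le_rpow d v hv.1
    _ = u ^ (d:ℝ) / d := by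
        rw [integral_rpow (Or.inl (by linarith : (-1:ℝ) < (d:ℝ) - 1))]
        rw [Real.zero_rpow (by linarith : (d:ℝ) - 1 + 1 ≠ 0)]
        rw [show (d:ℝ) - 1 + 1 = (d:ℝ) by ring]
        ring

set_option maxHeartbeats 1000000 in
/-- Logarithmic bound on `f̂₀(r) = r − f₀(r)`: there are constants `A, B` with
`|r − f₀(r)| ≤ A + B log(1+r)` for all `r ≥ 0`. -/
theorem stmt17 (d : ℕ) (hd : 2 ≤ d) (γ : ℝ)
    (hγ : γ = (1 / Real.sqrt π) * (Real.Gamma (((d : ℝ) + 1) / 2) / Real.Gamma ((d : ℝ) / 2)))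
    (f₀ : ℝ → ℝ)
    (hf : ∀ r : ℝ, f₀ r = 2 * γ * ∫ u in (0:ℝ)..r,
      ((1 + u ^ 2) / u ^ 2) ^ (((d : ℝ) - 1) / 2) *
        ∫ v in (0:ℝ)..u, v ^ ((d : ℝ) - 1) / (1 + v ^ 2) ^ (((d : ℝ) + 1) / 2)) :
    ∃ A B : ℝ, ∀ r : ℝ, 0 ≤ r → |r - f₀ r| ≤ A + B * Real.log (1 + r) := by
  have hd1 : (1:ℝ) ≤ (d:ℝ) := by exact_mod_cast Nat.one_le_of_lt hd
  have hd2 : (2:ℝ) ≤ (d:ℝ) := by exact_mod_cast hd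
  have hdq : (0:ℝ) ≤ ((d:ℝ) - 1)/2 := by linarith
  set φ : ℝ → ℝ := fun v => v ^ ((d:ℝ) - 1) / (1 + v ^ 2) ^ (((d:ℝ) + 1) / 2) with hφ
  set I : ℝ → ℝ := fun u => ∫ v in (0:ℝ)..u, φ v with hI
  set T : ℝ := ∫ v in Set.Ioi (0:ℝ), φ v with hTdef
  have hsπ : (0:ℝ) < Real.sqrt π := Real.sqrt_pos.2 Real.pi_pos
  have hG0 : 0 < Real.Gamma ((d:ℝ)/2) := Real.Gamma_pos_of_pos (by linarith)
  have hG1 : 0 < Real.Gamma (((d:ℝ)+1)/2) := Real.Gamma_pos_of_pos (by linarith)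
  have hγ0 : 0 < γ := by rw [hγ]; positivity
  have hT : 2 * γ * T = 1 := by
    rw [hTdef, hφ, key_identity d hd, hγ]
    field_simp
  have hφc : Continuous φ := phi_cont d hd
  have hIc : Continuous I :=
    intervalIntegral.continuous_primitive (fun a b => hφc.intervalIntegrable a b) 0
  have hpowc : Continuous (fun x : ℝ => x ^ (((d:ℝ)-1)/2)) :=
    continuous_iff_continuousAt.2 fun x => Real.continuousAt_rpow_const x _ (Or.inr hdq)
  have hgm : Measurable (fun u : ℝ => ((1 + u ^ 2) / u ^ 2) ^ (((d : ℝ) - 1) / 2) * I u) := by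
    apply Measurable.mul _ hIc.measurable
    exact hpowc.measurable.comp ((measurable_const.add (measurable_id.pow_const 2)).div
      (measurable_id.pow_const 2))
  have hI0 : ∀ u : ℝ, 0 ≤ u → 0 ≤ I u := fun u hu =>
    intervalIntegral.integral_nonneg hu (fun v hv => phi_nonneg d v hv.1)
  have hg0 : ∀ u : ℝ, 0 ≤ u → 0 ≤ ((1 + u ^ 2) / u ^ 2) ^ (((d : ℝ) - 1) / 2) * I u :=
    fun u hu => mul_nonneg (Real.rpow_nonneg (by positivity) _) (hI0 u hu)
  set M0 : ℝ := (2:ℝ) ^ (((d:ℝ) - 1)/2) with hM0def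
  have hM0pos : 0 < M0 := Real.rpow_pos_of_pos two_pos _
  have hsmall : ∀ u : ℝ, 0 < u → u ≤ 1 →
      ((1 + u ^ 2) / u ^ 2) ^ (((d : ℝ) - 1) / 2) * I u ≤ M0 := by
    intro u hu0 hu1
    have hu2 : (u ^ 2 : ℝ) = u ^ ((2:ℕ):ℝ) := (Real.rpow_natCast u 2).symm
    have hsq : ((u^2:ℝ)) ^ (((d:ℝ) - 1)/2) = u ^ ((d:ℝ) - 1) := by
      rw [hu2, ← Real.rpow_mul hu0.le]; congr 1; push_cast; ring
    have ha : ((1 + u ^ 2) / u ^ 2) ^ (((d : ℝ) - 1) / 2)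
        = (1 + u ^ 2) ^ (((d : ℝ) - 1) / 2) / u ^ ((d:ℝ) - 1) := by
      rw [Real.div_rpow (by positivity) (by positivity), hsq]
    have hup : (0:ℝ) < u ^ ((d:ℝ) - 1) := Real.rpow_pos_of_pos hu0 _
    have hnum : (0:ℝ) ≤ (1 + u ^ 2) ^ (((d : ℝ) - 1) / 2) := Real.rpow_nonneg (by positivity) _
    have hIle : I u ≤ u ^ (d:ℝ) / d := I_le d hd u hu0.le
    have hg1 : ((1 + u ^ 2) / u ^ 2) ^ (((d : ℝ) - 1) / 2) * I u
        ≤ ((1 + u ^ 2) ^ (((d : ℝ) - 1) / 2) / u ^ ((d:ℝ) - 1)) * (u ^ (d:ℝ) / d) := by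
      rw [ha]
      exact mul_le_mul_of_nonneg_left hIle (div_nonneg hnum hup.le)
    have hpow : u ^ (d:ℝ) = u ^ ((d:ℝ) - 1) * u ^ (1:ℝ) := by
      rw [← Real.rpow_add hu0]; congr 1; ring
    have hg2 : ((1 + u ^ 2) ^ (((d : ℝ) - 1) / 2) / u ^ ((d:ℝ) - 1)) * (u ^ (d:ℝ) / d)
        = (1 + u ^ 2) ^ (((d : ℝ) - 1) / 2) * u / d := by
      rw [hpow, Real.rpow_one]
      field_simp
    have hbB : (1 + u ^ 2) ^ (((d : ℝ) - 1) / 2) ≤ M0 :=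
      Real.rpow_le_rpow (by positivity) (by nlinarith) hdq
    have hfin : (1 + u ^ 2) ^ (((d : ℝ) - 1) / 2) * u / (d:ℝ) ≤ M0 := by
      have h1 : (1 + u ^ 2) ^ (((d : ℝ) - 1) / 2) * u ≤ M0 * 1 :=
        mul_le_mul hbB hu1 hu0.le hM0pos.le
      have h2 : (1 + u ^ 2) ^ (((d : ℝ) - 1) / 2) * u / (d:ℝ)
          ≤ (1 + u ^ 2) ^ (((d : ℝ) - 1) / 2) * u / 1 := by
        apply div_le_div_of_nonneg_left (mul_nonneg hnum hu0.le) one_pos hd1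
      rw [div_one] at h2
      linarith
    calc ((1 + u ^ 2) / u ^ 2) ^ (((d : ℝ) - 1) / 2) * I u
        ≤ (1 + u ^ 2) ^ (((d : ℝ) - 1) / 2) * u / d := hg2 ▸ hg1
      _ ≤ M0 := hfin
  set C : ℝ := (2:ℝ) ^ d - 1 + 2 * γ with hCdef
  have h2d1 : (1:ℝ) ≤ 2 ^ d := one_le_pow₀ (by norm_num)
  have hC0 : 0 ≤ C := by rw [hCdef]; nlinarith
  have hest : ∀ u : ℝ, 1 ≤ u →
      |1 - 2 * γ * (((1 + u ^ 2) / u ^ 2) ^ (((d : ℝ) - 1) / 2) * I u)| ≤ C / u := by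
    intro u hu1
    have hu0 : (0:ℝ) < u := lt_of_lt_of_le one_pos hu1
    have hIu : I u = T - ∫ v in Set.Ioi u, φ v := I_split d hd u hu0.le
    set t : ℝ := ∫ v in Set.Ioi u, φ v with htdef
    have ht0 : 0 ≤ t := tail_nonneg d u hu0.le
    have ht1 : t ≤ 1 / u := tail_le d hd u hu1
    set a : ℝ := ((1 + u ^ 2) / u ^ 2) ^ (((d : ℝ) - 1) / 2) with hadef
    have hu2nn : (0:ℝ) ≤ 1 / u ^ 2 := by positivity
    have hbase : (1 + u ^ 2) / u ^ 2 = 1 + 1 / u ^ 2 := by field_simp; ring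
    have ha1 : 1 ≤ a := by
      rw [hadef, hbase]
      exact Real.one_le_rpow (by linarith) hdq
    have ha2 : a ≤ 1 + ((2:ℝ) ^ d - 1) / u ^ 2 := by
      have h1u : 1 / u ^ 2 ≤ 1 := by
        rw [div_le_one (by positivity)]; nlinarith
      calc a = (1 + 1/u^2) ^ (((d : ℝ) - 1) / 2) := by rw [hadef, hbase]
        _ ≤ (1 + 1/u^2) ^ ((d:ℝ)) :=
            Real.rpow_le_rpow_of_exponent_le (by linarith) (by linarith)
        _ = (1 + 1/u^2) ^ (d:ℕ) := by rw [Real.rpow_natCast]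
        _ ≤ 1 + ((2:ℝ) ^ d - 1) * (1/u^2) := aux_pow_le d _ hu2nn h1u
        _ = 1 + ((2:ℝ) ^ d - 1) / u ^ 2 := by ring
    rw [hIu]
    have h2γI : 0 ≤ 2 * γ * (T - t) := by
      rw [← hIu]; have := hI0 u hu0.le; positivity
    have hTt : 2 * γ * (T - t) = 1 - 2 * γ * t := by rw [mul_sub, hT]
    have huu : u ≤ u ^ 2 := by
      calc u = u * 1 := (mul_one u).symm
        _ ≤ u * u := mul_le_mul_of_nonneg_left hu1 hu0.le
        _ = u ^ 2 := (sq u).symm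
    have hdiv1 : ((2:ℝ) ^ d - 1) / u ^ 2 ≤ ((2:ℝ) ^ d - 1) / u := by
      apply div_le_div_of_nonneg_left (by linarith) hu0 huu
    rw [abs_le]
    constructor
    · have hle : 2 * γ * (a * (T - t)) ≤ a := by
        calc 2 * γ * (a * (T - t)) = a * (2 * γ * (T - t)) := by ring
          _ ≤ a * 1 := by
              apply mul_le_mul_of_nonneg_left _ (by linarith)
              rw [hTt]; nlinarith
          _ = a := mul_one a
      have hCu : ((2:ℝ)^d - 1) / u ≤ C / u := by
        apply div_le_div_of_nonneg_right ?_ hu0.le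
        rw [hCdef]; linarith
      linarith
    · have hga : 1 - 2 * γ * t ≤ 2 * γ * (a * (T - t)) := by
        calc 2 * γ * (a * (T - t)) = a * (2 * γ * (T - t)) := by ring
          _ ≥ 1 * (2 * γ * (T - t)) := mul_le_mul_of_nonneg_right ha1 h2γI
          _ = 1 - 2 * γ * t := by rw [one_mul, hTt]
      have h2 : 2 * γ * t ≤ 2 * γ / u := by
        calc 2 * γ * t ≤ 2 * γ * (1/u) := mul_le_mul_of_nonneg_left ht1 (by linarith)
          _ = 2 * γ / u := by ring
      have h3 : 2 * γ / u ≤ C / u := by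
        apply div_le_div_of_nonneg_right ?_ hu0.le
        rw [hCdef]; linarith
      linarith
  -- assembly
  set Mb : ℝ := M0 + (1 + C)/(2*γ) with hMbdef
  have hratio0 : 0 ≤ (1 + C)/(2*γ) := by positivity
  have hGb : ∀ u : ℝ, 0 < u →
      |((1 + u ^ 2) / u ^ 2) ^ (((d : ℝ) - 1) / 2) * I u| ≤ Mb := by
    intro u hu
    rw [abs_of_nonneg (hg0 u hu.le)]
    rcases le_or_gt u 1 with h|h
    · have := hsmall u hu h
      rw [hMbdef]; linarith
    · have h2 := (abs_le.1 (hest u h.le)).1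
      have hCu : C/u ≤ C := div_le_self hC0 h.le
      have hG2γ : 2*γ*(((1 + u ^ 2) / u ^ 2) ^ (((d : ℝ) - 1) / 2) * I u) ≤ 1 + C := by
        linarith
      have : ((1 + u ^ 2) / u ^ 2) ^ (((d : ℝ) - 1) / 2) * I u ≤ (1 + C)/(2*γ) := by
        rw [le_div_iff₀ (by positivity)]
        linarith
      rw [hMbdef]; linarith
  have hGint : ∀ b : ℝ, 0 ≤ b → IntervalIntegrable
      (fun u : ℝ => ((1 + u ^ 2) / u ^ 2) ^ (((d : ℝ) - 1) / 2) * I u) volume 0 b := by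
    intro b hb
    rw [intervalIntegrable_iff_integrableOn_Ioc_of_le hb]
    apply MeasureTheory.Measure.integrableOn_of_bounded (M := Mb) measure_Ioc_lt_top.ne
      hgm.aestronglyMeasurable
    filter_upwards [MeasureTheory.ae_restrict_mem measurableSet_Ioc] with u hu
    rw [Real.norm_eq_abs]
    exact hGb u hu.1
  have hFint : ∀ b : ℝ, 0 ≤ b → IntervalIntegrable
      (fun u : ℝ => 1 - 2*γ*(((1 + u ^ 2) / u ^ 2) ^ (((d : ℝ) - 1) / 2) * I u)) volume 0 b :=
    fun b hb => intervalIntegrable_const.sub ((hGint b hb).const_mul (2*γ))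
  have hkey : ∀ b : ℝ, 0 ≤ b → b - f₀ b
      = ∫ u in (0:ℝ)..b, (1 - 2*γ*(((1 + u ^ 2) / u ^ 2) ^ (((d : ℝ) - 1) / 2) * I u)) := by
    intro b hb
    rw [intervalIntegral.integral_sub intervalIntegrable_const ((hGint b hb).const_mul (2*γ)),
      intervalIntegral.integral_const_mul, hf b]
    simp
    exact Or.inl rfl
  have hseg : ∀ b : ℝ, 0 ≤ b → b ≤ 1 →
      |∫ u in (0:ℝ)..b, (1 - 2*γ*(((1 + u ^ 2) / u ^ 2) ^ (((d : ℝ) - 1) / 2) * I u))|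
        ≤ 1 + 2*γ*M0 := by
    intro b hb hb1
    have hbd : ∀ x ∈ Set.uIoc (0:ℝ) b,
        ‖1 - 2*γ*(((1 + x ^ 2) / x ^ 2) ^ (((d : ℝ) - 1) / 2) * I x)‖ ≤ 1 + 2*γ*M0 := by
      intro x hx
      rw [Set.uIoc_of_le hb] at hx
      have hx0 : 0 < x := hx.1
      have hx1 : x ≤ 1 := le_trans hx.2 hb1
      have hG1 := hsmall x hx0 hx1
      have hG0' := hg0 x hx0.le
      have hmul : 2*γ*(((1 + x ^ 2) / x ^ 2) ^ (((d : ℝ) - 1) / 2) * I x) ≤ 2*γ*M0 :=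
        mul_le_mul_of_nonneg_left hG1 (by positivity)
      have hmul0 : 0 ≤ 2*γ*(((1 + x ^ 2) / x ^ 2) ^ (((d : ℝ) - 1) / 2) * I x) := by positivity
      rw [Real.norm_eq_abs, abs_le]
      constructor <;> linarith
    have := intervalIntegral.norm_integral_le_of_norm_le_const hbd
    rw [Real.norm_eq_abs] at this
    calc _ ≤ (1 + 2*γ*M0) * |b - 0| := this
      _ ≤ (1 + 2*γ*M0) * 1 := by
          apply mul_le_mul_of_nonneg_left _ (by positivity)
          rw [sub_zero, abs_of_nonneg hb]; exact hb1
      _ = 1 + 2*γ*M0 := mul_one _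
  refine ⟨1 + 2*γ*M0, C, ?_⟩
  intro r hr
  have hlog : 0 ≤ Real.log (1 + r) := Real.log_nonneg (by linarith)
  rcases le_or_gt r 1 with h|h
  · rw [hkey r hr]
    have := hseg r hr h
    nlinarith [mul_nonneg hC0 hlog]
  · have h1r : (1:ℝ) ≤ r := h.le
    have h1rint : IntervalIntegrable
        (fun u : ℝ => 1 - 2*γ*(((1 + u ^ 2) / u ^ 2) ^ (((d : ℝ) - 1) / 2) * I u)) volume 1 r := by
      apply (hFint r hr).mono_set
      rw [Set.uIcc_of_le h1r, Set.uIcc_of_le hr]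
      exact Set.Icc_subset_Icc (by norm_num) le_rfl
    have hsplit := intervalIntegral.integral_add_adjacent_intervals
      (hFint 1 zero_le_one) h1rint
    have htail : |∫ u in (1:ℝ)..r, (1 - 2*γ*(((1 + u ^ 2) / u ^ 2) ^ (((d : ℝ) - 1) / 2) * I u))|
        ≤ C * Real.log (1 + r) := by
      have hb : IntervalIntegrable (fun u : ℝ => C * (1/u)) volume 1 r := by
        apply ContinuousOn.intervalIntegrable
        apply continuousOn_const.mul
        apply continuousOn_const.div continuousOn_id
        intro x hx
        rw [Set.uIcc_of_le h1r] at hx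
        exact ne_of_gt (lt_of_lt_of_le one_pos hx.1)
      have hbd : ∀ᵐ t ∂(volume.restrict (Set.uIoc (1:ℝ) r)),
          ‖1 - 2*γ*(((1 + t ^ 2) / t ^ 2) ^ (((d : ℝ) - 1) / 2) * I t)‖ ≤ C * (1/t) := by
        filter_upwards [MeasureTheory.ae_restrict_mem measurableSet_uIoc] with x hx
        rw [Set.uIoc_of_le h1r] at hx
        rw [Real.norm_eq_abs]
        calc _ ≤ C / x := hest x hx.1.le
          _ = C * (1/x) := by ring
      have hnorm := (intervalIntegral.norm_integral_le_of_norm_le h1r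
        ((MeasureTheory.ae_restrict_iff' measurableSet_Ioc).1 (by rwa [Set.uIoc_of_le h1r] at hbd)) hb).trans
        (le_abs_self _)
      rw [Real.norm_eq_abs] at hnorm
      calc _ ≤ |∫ u in (1:ℝ)..r, C * (1/u)| := hnorm
        _ = ∫ u in (1:ℝ)..r, C * (1/u) := by
            apply abs_of_nonneg
            apply intervalIntegral.integral_nonneg h1r
            intro x hx
            have hx0 : (0:ℝ) < x := lt_of_lt_of_le one_pos hx.1
            positivity
        _ = C * Real.log (r/1) := by
            rw [intervalIntegral.integral_const_mul, integral_one_div]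
            rw [Set.uIcc_of_le h1r]
            intro hmem
            exact absurd hmem.1 (by norm_num)
        _ = C * Real.log r := by rw [div_one]
        _ ≤ C * Real.log (1 + r) := by
            apply mul_le_mul_of_nonneg_left _ hC0
            apply Real.log_le_log (by linarith) (by linarith)
    rw [hkey r hr, ← hsplit]
    calc |_ + _| ≤ _ + _ := abs_add_le _ _
      _ ≤ (1 + 2*γ*M0) + C * Real.log (1 + r) := add_le_add (hseg 1 zero_le_one le_rfl) htail
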